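/- Let F be a field of characteristic 2 and let α, β, γ, δ, a, b ∈ F with β ≠ 0, δ ≠ 0, and e := a² + a·b + b²·(α + γ) ≠ 0. Then there is an F-algebra isomorphism [α, β) ⊗_F [γ, δ) ≅ [α, e·β) ⊗_F [γ, e·δ). -/

import Mathlib

open scoped TensorProduct

/-- The relations defining the characteristic two quaternion symbol algebra `[α, β)`:
`x² + x = α`, `y² = β`, `xy + yx = y`. -/
inductive QuatSymbolRel (F : Type*) [CommRing F] (α β : F) :
    FreeAlgebra F (Fin 2) → FreeAlgebra F (Fin 2) → Prop
  | x_rel : QuatSymbolRel F α β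
      (FreeAlgebra.ι F (0 : Fin 2) * FreeAlgebra.ι F (0 : Fin 2) + FreeAlgebra.ι F (0 : Fin 2))
      (algebraMap F (FreeAlgebra F (Fin 2)) α)
  | y_rel : QuatSymbolRel F α β
      (FreeAlgebra.ι F (1 : Fin 2) * FreeAlgebra.ι F (1 : Fin 2))
      (algebraMap F (FreeAlgebra F (Fin 2)) β)
  | xy_rel : QuatSymbolRel F α β
      (FreeAlgebra.ι F (0 : Fin 2) * FreeAlgebra.ι F (1 : Fin 2) +
        FreeAlgebra.ι F (1 : Fin 2) * FreeAlgebra.ι F (0 : Fin 2))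
      (FreeAlgebra.ι F (1 : Fin 2))

/-- The characteristic two quaternion symbol algebra `[α, β)` over `F`: the `F`-algebra
generated by `x, y` subject to `x² + x = α`, `y² = β`, `xy + yx = y`. -/
def QuatSymbol (F : Type*) [CommRing F] (α β : F) :=
  RingQuot (QuatSymbolRel F α β)

noncomputable instance (F : Type*) [CommRing F] (α β : F) : Ring (QuatSymbol F α β) :=
  inferInstanceAs (Ring (RingQuot (QuatSymbolRel F α β)))

noncomputable instance (F : Type*) [CommRing F] (α β : F) : Algebra F (QuatSymbol F α β) :=
  inferInstanceAs (Algebra F (RingQuot (QuatSymbolRel F α β)))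

namespace QuatSymbol

variable {F : Type*} [CommRing F] {α β : F}

noncomputable def X (F : Type*) [CommRing F] (α β : F) : QuatSymbol F α β :=
  RingQuot.mkAlgHom F (QuatSymbolRel F α β) (FreeAlgebra.ι F 0)

noncomputable def Y (F : Type*) [CommRing F] (α β : F) : QuatSymbol F α β :=
  RingQuot.mkAlgHom F (QuatSymbolRel F α β) (FreeAlgebra.ι F 1)

theorem X_rel : X F α β * X F α β + X F α β = algebraMap F _ α := by
  have h := RingQuot.mkAlgHom_rel F (QuatSymbolRel.x_rel (F := F) (α := α) (β := β))
  simp only [map_add, map_mul, AlgHom.commutes] at h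
  exact h

theorem Y_rel : Y F α β * Y F α β = algebraMap F _ β := by
  have h := RingQuot.mkAlgHom_rel F (QuatSymbolRel.y_rel (F := F) (α := α) (β := β))
  simp only [map_add, map_mul, AlgHom.commutes] at h
  exact h

theorem XY_rel : X F α β * Y F α β + Y F α β * X F α β = Y F α β := by
  have h := RingQuot.mkAlgHom_rel F (QuatSymbolRel.xy_rel (F := F) (α := α) (β := β))
  simp only [map_add, map_mul] at h
  exact h

variable {T : Type*} [Ring T] [Algebra F T]

noncomputable def lift (x y : T) (h1 : x * x + x = algebraMap F T α)
    (h2 : y * y = algebraMap F T β) (h3 : x * y + y * x = y) :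
    QuatSymbol F α β →ₐ[F] T :=
  RingQuot.liftAlgHom F ⟨FreeAlgebra.lift F ![x, y], by
    intro p q h
    cases h <;>
      simpa only [map_add, map_mul, AlgHom.commutes, FreeAlgebra.lift_ι_apply,
        Matrix.cons_val_zero, Matrix.cons_val_one, Matrix.head_cons] using (by assumption)⟩

@[simp] theorem lift_X (x y : T) (h1 : x * x + x = algebraMap F T α)
    (h2 : y * y = algebraMap F T β) (h3 : x * y + y * x = y) :
    lift x y h1 h2 h3 (X F α β) = x := by
  rw [X, lift]
  erw [RingQuot.liftAlgHom_mkAlgHom_apply]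
  simp

@[simp] theorem lift_Y (x y : T) (h1 : x * x + x = algebraMap F T α)
    (h2 : y * y = algebraMap F T β) (h3 : x * y + y * x = y) :
    lift x y h1 h2 h3 (Y F α β) = y := by
  rw [Y, lift]
  erw [RingQuot.liftAlgHom_mkAlgHom_apply]
  simp

theorem hom_ext {f g : QuatSymbol F α β →ₐ[F] T} (hX : f (X F α β) = g (X F α β))
    (hY : f (Y F α β) = g (Y F α β)) : f = g := by
  refine RingQuot.ringQuot_ext' F f g (FreeAlgebra.hom_ext ?_)
  funext i
  fin_cases i
  · exact hX
  · exact hY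

theorem commute_lift (g : QuatSymbol F α β →ₐ[F] T) {z : T}
    (h0 : Commute z (g (X F α β))) (h1 : Commute z (g (Y F α β))) (t : QuatSymbol F α β) :
    Commute z (g t) := by
  obtain ⟨p, rfl⟩ := RingQuot.mkAlgHom_surjective F _ t
  induction p with
  | grade0 r =>
    rw [AlgHom.commutes]
    erw [AlgHom.commutes]
    exact (Algebra.commutes r z).symm
  | grade1 i =>
    fin_cases i
    · exact h0
    · exact h1
  | mul p q hp hq =>
    rw [map_mul]
    erw [map_mul g]
    exact hp.mul_right hq
  | add p q hp hq =>
    rw [map_add]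
    erw [map_add g]
    exact hp.add_right hq

end QuatSymbol


section KeyComputations

variable {F T : Type*} [CommRing F] [Ring T] [Algebra F T]

theorem flip_rel (h2 : ∀ z : T, z + z = 0) {p q r : T} (h : p + q = r) : q = p + r := by
  rw [← h, ← add_assoc, h2, zero_add]

theorem sq_red (h2 : ∀ z : T, z + z = 0) {x : T} {c : F}
    (hx : x * x + x = algebraMap F T c) : x * x = x + algebraMap F T c := by
  calc x * x = x * x + x + x := by rw [add_assoc, h2, add_zero]
    _ = algebraMap F T c + x := by rw [hx]
    _ = x + algebraMap F T c := by rw [add_comm]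

theorem key (h2F : (2 : F) = 0) (α β γ δ c0 c1 : F) (x y u v : T)
    (hx : x * x + x = algebraMap F T α) (hy : y * y = algebraMap F T β)
    (hxy : x * y + y * x = y)
    (hu : u * u + u = algebraMap F T γ) (hv : v * v = algebraMap F T δ)
    (huv : u * v + v * u = v)
    (hxu : x * u = u * x) (hxv : x * v = v * x) (hyu : y * u = u * y) (hyv : y * v = v * y) :
    (x * ((algebraMap F T c0 + algebraMap F T c1 * (x + u)) * y) +
        ((algebraMap F T c0 + algebraMap F T c1 * (x + u)) * y) * x =
      (algebraMap F T c0 + algebraMap F T c1 * (x + u)) * y) ∧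
    (((algebraMap F T c0 + algebraMap F T c1 * (x + u)) * y) *
        ((algebraMap F T c0 + algebraMap F T c1 * (x + u)) * y) =
      algebraMap F T ((c0 ^ 2 + c0 * c1 + c1 ^ 2 * (α + γ)) * β)) ∧
    (u * ((algebraMap F T c0 + algebraMap F T c1 * (x + u)) * v) +
        ((algebraMap F T c0 + algebraMap F T c1 * (x + u)) * v) * u =
      (algebraMap F T c0 + algebraMap F T c1 * (x + u)) * v) ∧
    (((algebraMap F T c0 + algebraMap F T c1 * (x + u)) * v) *
        ((algebraMap F T c0 + algebraMap F T c1 * (x + u)) * v) =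
      algebraMap F T ((c0 ^ 2 + c0 * c1 + c1 ^ 2 * (α + γ)) * δ)) ∧
    (x * ((algebraMap F T c0 + algebraMap F T c1 * (x + u)) * v) =
      ((algebraMap F T c0 + algebraMap F T c1 * (x + u)) * v) * x) ∧
    (((algebraMap F T c0 + algebraMap F T c1 * (x + u)) * y) * u =
      u * ((algebraMap F T c0 + algebraMap F T c1 * (x + u)) * y)) ∧
    (((algebraMap F T c0 + algebraMap F T c1 * (x + u)) * y) *
        ((algebraMap F T c0 + algebraMap F T c1 * (x + u)) * v) =
      ((algebraMap F T c0 + algebraMap F T c1 * (x + u)) * v) *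
        ((algebraMap F T c0 + algebraMap F T c1 * (x + u)) * y)) := by
  have h2 : ∀ z : T, z + z = 0 := fun z => by rw [← two_smul F z, h2F, zero_smul]
  have rxx : x * x = x + algebraMap F T α := sq_red h2 hx
  have ruu : u * u = u + algebraMap F T γ := sq_red h2 hu
  have ryx : y * x = x * y + y := flip_rel h2 hxy
  have rvu : v * u = u * v + v := flip_rel h2 huv
  have rux : u * x = x * u := hxu.symm
  have rvx : v * x = x * v := hxv.symm
  have rvy : v * y = y * v := hyv.symm
  have rxx' : ∀ z : T, x * (x * z) = x * z + algebraMap F T α * z := fun z => by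
    rw [← mul_assoc, rxx, add_mul]
  have ruu' : ∀ z : T, u * (u * z) = u * z + algebraMap F T γ * z := fun z => by
    rw [← mul_assoc, ruu, add_mul]
  have ryy' : ∀ z : T, y * (y * z) = algebraMap F T β * z := fun z => by
    rw [← mul_assoc, hy]
  have rvv' : ∀ z : T, v * (v * z) = algebraMap F T δ * z := fun z => by
    rw [← mul_assoc, hv]
  have ryx' : ∀ z : T, y * (x * z) = x * (y * z) + y * z := fun z => by
    rw [← mul_assoc, ryx, add_mul, mul_assoc]
  have rvu' : ∀ z : T, v * (u * z) = u * (v * z) + v * z := fun z => by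
    rw [← mul_assoc, rvu, add_mul, mul_assoc]
  have rux' : ∀ z : T, u * (x * z) = x * (u * z) := fun z => by
    rw [← mul_assoc, rux, mul_assoc]
  have rvx' : ∀ z : T, v * (x * z) = x * (v * z) := fun z => by
    rw [← mul_assoc, rvx, mul_assoc]
  have rvy' : ∀ z : T, v * (y * z) = y * (v * z) := fun z => by
    rw [← mul_assoc, rvy, mul_assoc]
  have ryu' : ∀ z : T, y * (u * z) = u * (y * z) := fun z => by
    rw [← mul_assoc, hyu, mul_assoc]
  refine ⟨?_, ?_, ?_, ?_, ?_, ?_, ?_⟩ <;>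
    · simp only [mul_add, add_mul, mul_assoc, rxx, ruu, hy, hv, ryx, rvu, rux, rvx, rvy, hyu,
        rxx', ruu', ryy', rvv', ryx', rvu', rux', rvx', rvy', ryu',
        Algebra.algebraMap_eq_smul_one, smul_mul_assoc, mul_smul_comm, smul_smul, smul_add,
        one_mul, mul_one]
      try match_scalars <;>
        first
          | ring1
          | linear_combination (c0 + c1) * h2F
          | linear_combination c1 * h2F
          | linear_combination c1 * α * h2F
          | linear_combination c1 * γ * h2F
          | linear_combination (c0 * c1 * β + c1 * c1 * β) * h2F
          | linear_combination (c0 * c1 * δ + c1 * c1 * δ) * h2F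
          | linear_combination (c1 * c1 * β) * h2F
          | linear_combination (c1 * c1 * δ) * h2F
          | linear_combination (c0 * c1 + c1 * c1) * h2F

theorem keyM (h2F : (2 : F) = 0) (α γ c0 c1 d0 d1 : F) (x u : T)
    (hx : x * x + x = algebraMap F T α) (hu : u * u + u = algebraMap F T γ)
    (hxu : x * u = u * x) :
    (algebraMap F T d0 + algebraMap F T d1 * (x + u)) *
        (algebraMap F T c0 + algebraMap F T c1 * (x + u)) =
      algebraMap F T (d0 * c0 + d1 * c1 * (α + γ)) +
        algebraMap F T (d0 * c1 + d1 * c0 + d1 * c1) * (x + u) := by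
  have h2 : ∀ z : T, z + z = 0 := fun z => by rw [← two_smul F z, h2F, zero_smul]
  have rxx : x * x = x + algebraMap F T α := sq_red h2 hx
  have ruu : u * u = u + algebraMap F T γ := sq_red h2 hu
  have rux : u * x = x * u := hxu.symm
  have rxx' : ∀ z : T, x * (x * z) = x * z + algebraMap F T α * z := fun z => by
    rw [← mul_assoc, rxx, add_mul]
  have ruu' : ∀ z : T, u * (u * z) = u * z + algebraMap F T γ * z := fun z => by
    rw [← mul_assoc, ruu, add_mul]
  have rux' : ∀ z : T, u * (x * z) = x * (u * z) := fun z => by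
    rw [← mul_assoc, rux, mul_assoc]
  simp only [mul_add, add_mul, mul_assoc, rxx, ruu, rux, rxx', ruu', rux',
    Algebra.algebraMap_eq_smul_one, smul_mul_assoc, mul_smul_comm, smul_smul, smul_add,
    one_mul, mul_one]
  try match_scalars <;>
    first
      | ring1
      | linear_combination d1 * c1 * h2F
      | linear_combination (d1 * c1 * x) * h2F

end KeyComputations

section TensorRels

variable (F : Type*) [CommRing F] (α β γ δ : F)

theorem tensor_rels :
    ((QuatSymbol.X F α β ⊗ₜ[F] (1 : QuatSymbol F γ δ)) * (QuatSymbol.X F α β ⊗ₜ 1) +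
        QuatSymbol.X F α β ⊗ₜ 1 =
      algebraMap F (QuatSymbol F α β ⊗[F] QuatSymbol F γ δ) α) ∧
    ((QuatSymbol.Y F α β ⊗ₜ[F] (1 : QuatSymbol F γ δ)) * (QuatSymbol.Y F α β ⊗ₜ 1) =
      algebraMap F _ β) ∧
    ((QuatSymbol.X F α β ⊗ₜ[F] (1 : QuatSymbol F γ δ)) * (QuatSymbol.Y F α β ⊗ₜ 1) +
        (QuatSymbol.Y F α β ⊗ₜ[F] (1 : QuatSymbol F γ δ)) * (QuatSymbol.X F α β ⊗ₜ 1) =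
      QuatSymbol.Y F α β ⊗ₜ 1) ∧
    (((1 : QuatSymbol F α β) ⊗ₜ[F] QuatSymbol.X F γ δ) * (1 ⊗ₜ QuatSymbol.X F γ δ) +
        1 ⊗ₜ QuatSymbol.X F γ δ = algebraMap F _ γ) ∧
    (((1 : QuatSymbol F α β) ⊗ₜ[F] QuatSymbol.Y F γ δ) * (1 ⊗ₜ QuatSymbol.Y F γ δ) =
      algebraMap F _ δ) ∧
    (((1 : QuatSymbol F α β) ⊗ₜ[F] QuatSymbol.X F γ δ) * (1 ⊗ₜ QuatSymbol.Y F γ δ) +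
        ((1 : QuatSymbol F α β) ⊗ₜ[F] QuatSymbol.Y F γ δ) * (1 ⊗ₜ QuatSymbol.X F γ δ) =
      1 ⊗ₜ QuatSymbol.Y F γ δ) ∧
    ((QuatSymbol.X F α β ⊗ₜ[F] (1 : QuatSymbol F γ δ)) * (1 ⊗ₜ QuatSymbol.X F γ δ) =
      ((1 : QuatSymbol F α β) ⊗ₜ[F] QuatSymbol.X F γ δ) * (QuatSymbol.X F α β ⊗ₜ 1)) ∧
    ((QuatSymbol.X F α β ⊗ₜ[F] (1 : QuatSymbol F γ δ)) * (1 ⊗ₜ QuatSymbol.Y F γ δ) =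
      ((1 : QuatSymbol F α β) ⊗ₜ[F] QuatSymbol.Y F γ δ) * (QuatSymbol.X F α β ⊗ₜ 1)) ∧
    ((QuatSymbol.Y F α β ⊗ₜ[F] (1 : QuatSymbol F γ δ)) * (1 ⊗ₜ QuatSymbol.X F γ δ) =
      ((1 : QuatSymbol F α β) ⊗ₜ[F] QuatSymbol.X F γ δ) * (QuatSymbol.Y F α β ⊗ₜ 1)) ∧
    ((QuatSymbol.Y F α β ⊗ₜ[F] (1 : QuatSymbol F γ δ)) * (1 ⊗ₜ QuatSymbol.Y F γ δ) =
      ((1 : QuatSymbol F α β) ⊗ₜ[F] QuatSymbol.Y F γ δ) * (QuatSymbol.Y F α β ⊗ₜ 1)) := by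
  refine ⟨?_, ?_, ?_, ?_, ?_, ?_, ?_, ?_, ?_, ?_⟩ <;>
    simp only [Algebra.TensorProduct.tmul_mul_tmul, mul_one, one_mul,
      ← TensorProduct.add_tmul, ← TensorProduct.tmul_add,
      QuatSymbol.X_rel, QuatSymbol.Y_rel, QuatSymbol.XY_rel,
      Algebra.TensorProduct.algebraMap_apply] <;>
    rw [← Algebra.TensorProduct.algebraMap_apply', Algebra.TensorProduct.algebraMap_apply]

end TensorRels

section BuildHom

variable {F : Type*} [CommRing F]

theorem buildHom (h2F : (2 : F) = 0) (α β γ δ β' δ' c0 c1 : F)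
    (hβ' : (c0 ^ 2 + c0 * c1 + c1 ^ 2 * (α + γ)) * β' = β)
    (hδ' : (c0 ^ 2 + c0 * c1 + c1 ^ 2 * (α + γ)) * δ' = δ) :
    ∃ f : (QuatSymbol F α β ⊗[F] QuatSymbol F γ δ) →ₐ[F]
        (QuatSymbol F α β' ⊗[F] QuatSymbol F γ δ'),
      f (QuatSymbol.X F α β ⊗ₜ 1) = QuatSymbol.X F α β' ⊗ₜ 1 ∧
      f (QuatSymbol.Y F α β ⊗ₜ 1) =
        (algebraMap F _ c0 + algebraMap F _ c1 *
            (QuatSymbol.X F α β' ⊗ₜ 1 + 1 ⊗ₜ QuatSymbol.X F γ δ')) *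
          (QuatSymbol.Y F α β' ⊗ₜ 1) ∧
      f (1 ⊗ₜ QuatSymbol.X F γ δ) = 1 ⊗ₜ QuatSymbol.X F γ δ' ∧
      f (1 ⊗ₜ QuatSymbol.Y F γ δ) =
        (algebraMap F _ c0 + algebraMap F _ c1 *
            (QuatSymbol.X F α β' ⊗ₜ 1 + 1 ⊗ₜ QuatSymbol.X F γ δ')) *
          (1 ⊗ₜ QuatSymbol.Y F γ δ') := by
  obtain ⟨hx, hy, hxy, hu, hv, huv, hxu, hxv, hyu, hyv⟩ := tensor_rels F α β' γ δ'
  obtain ⟨k1, k2, k3, k4, k5, k6, k7⟩ := key h2F α β' γ δ' c0 c1 _ _ _ _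
    hx hy hxy hu hv huv hxu hxv hyu hyv
  rw [hβ'] at k2
  rw [hδ'] at k4
  set M := algebraMap F (QuatSymbol F α β' ⊗[F] QuatSymbol F γ δ') c0 +
      algebraMap F _ c1 * (QuatSymbol.X F α β' ⊗ₜ 1 + 1 ⊗ₜ QuatSymbol.X F γ δ') with hM
  let f₁ : QuatSymbol F α β →ₐ[F] (QuatSymbol F α β' ⊗[F] QuatSymbol F γ δ') :=
    QuatSymbol.lift (QuatSymbol.X F α β' ⊗ₜ 1) (M * (QuatSymbol.Y F α β' ⊗ₜ 1)) hx k2 k1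
  let f₂ : QuatSymbol F γ δ →ₐ[F] (QuatSymbol F α β' ⊗[F] QuatSymbol F γ δ') :=
    QuatSymbol.lift (1 ⊗ₜ QuatSymbol.X F γ δ') (M * (1 ⊗ₜ QuatSymbol.Y F γ δ')) hu k4 k3
  have hcomm : ∀ s t, Commute (f₁ s) (f₂ t) := by
    intro s t
    refine QuatSymbol.commute_lift f₂ ?_ ?_ t
    · rw [show f₂ (QuatSymbol.X F γ δ) = 1 ⊗ₜ QuatSymbol.X F γ δ' from QuatSymbol.lift_X _ _ _ _ _]
      exact ((QuatSymbol.commute_lift f₁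
        (by rw [QuatSymbol.lift_X]; exact hxu.symm)
        (by rw [QuatSymbol.lift_Y]; exact k6.symm) s).symm)
    · rw [show f₂ (QuatSymbol.Y F γ δ) = M * (1 ⊗ₜ QuatSymbol.Y F γ δ') from
        QuatSymbol.lift_Y _ _ _ _ _]
      exact ((QuatSymbol.commute_lift f₁
        (by rw [QuatSymbol.lift_X]; exact k5.symm)
        (by rw [QuatSymbol.lift_Y]; exact k7.symm) s).symm)
  refine ⟨Algebra.TensorProduct.lift f₁ f₂ hcomm, ?_, ?_, ?_, ?_⟩ <;>
    simp only [Algebra.TensorProduct.lift_tmul, map_one, mul_one, one_mul, f₁, f₂,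
      QuatSymbol.lift_X, QuatSymbol.lift_Y]

end BuildHom

/-- The `Ω_s` step on symbol presentations: with `e = a² + ab + b²(α+γ) ≠ 0`,
`[α,β) ⊗ [γ,δ) ≅ [α, e·β) ⊗ [γ, e·δ)`. -/
theorem quatSymbol_tensor_omegaS (F : Type*) [Field F] [CharP F 2] (α β γ δ a b : F)
    (hβ : β ≠ 0) (hδ : δ ≠ 0) (he : a ^ 2 + a * b + b ^ 2 * (α + γ) ≠ 0) :
    Nonempty ((QuatSymbol F α β ⊗[F] QuatSymbol F γ δ) ≃ₐ[F]
      (QuatSymbol F α ((a ^ 2 + a * b + b ^ 2 * (α + γ)) * β) ⊗[F]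
        QuatSymbol F γ ((a ^ 2 + a * b + b ^ 2 * (α + γ)) * δ))) := by

  classical
  have h2F : (2 : F) = 0 := by
    have := CharP.cast_eq_zero F 2
    simpa using this
  obtain ⟨e, he', hedef⟩ : ∃ e : F, e ≠ 0 ∧ e = a ^ 2 + a * b + b ^ 2 * (α + γ) := ⟨_, he, rfl⟩
  rw [show a ^ 2 + a * b + b ^ 2 * (α + γ) = e from hedef.symm]
  -- the map from left to right
  obtain ⟨Ψ, hΨ1, hΨ2, hΨ3, hΨ4⟩ := buildHom h2F α β γ δ (e * β) (e * δ) ((a + b) / e) (b / e)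
    (by
      have hkey : (a + b) ^ 2 + (a + b) * b + b ^ 2 * (α + γ) = e := by
        linear_combination -hedef + (a * b + b ^ 2) * h2F
      calc (((a + b) / e) ^ 2 + (a + b) / e * (b / e) + (b / e) ^ 2 * (α + γ)) * (e * β)
          = ((a + b) ^ 2 + (a + b) * b + b ^ 2 * (α + γ)) / e ^ 2 * (e * β) := by ring
        _ = e / e ^ 2 * (e * β) := by rw [hkey]
        _ = β := by field_simp)
    (by
      have hkey : (a + b) ^ 2 + (a + b) * b + b ^ 2 * (α + γ) = e := by
        linear_combination -hedef + (a * b + b ^ 2) * h2F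
      calc (((a + b) / e) ^ 2 + (a + b) / e * (b / e) + (b / e) ^ 2 * (α + γ)) * (e * δ)
          = ((a + b) ^ 2 + (a + b) * b + b ^ 2 * (α + γ)) / e ^ 2 * (e * δ) := by ring
        _ = e / e ^ 2 * (e * δ) := by rw [hkey]
        _ = δ := by field_simp)
  -- the map from right to left
  obtain ⟨Φ, hΦ1, hΦ2, hΦ3, hΦ4⟩ := buildHom h2F α (e * β) γ (e * δ) β δ a b (by rw [hedef]) (by rw [hedef])
  obtain ⟨hxS, -, -, huS, -, -, hxuS, -, -, -⟩ := tensor_rels F α β γ δ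
  obtain ⟨hxT, -, -, huT, -, -, hxuT, -, -, -⟩ := tensor_rels F α (e * β) γ (e * δ)
  -- products of the two multipliers are 1 (in S and in T)
  have prodS := keyM h2F α γ a b ((a + b) / e) (b / e) _ _ hxS huS hxuS
  have prodT := keyM h2F α γ ((a + b) / e) (b / e) a b _ _ hxT huT hxuT
  have c1S : (a + b) / e * a + b / e * b * (α + γ) = 1 := by
    field_simp
    linear_combination -hedef
  have c2S : (a + b) / e * b + b / e * a + b / e * b = 0 := by
    field_simp
    linear_combination (a * b + b ^ 2) * h2F
  have c1T : a * ((a + b) / e) + b * (b / e) * (α + γ) = 1 := by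
    field_simp
    linear_combination -hedef
  have c2T : a * (b / e) + b * ((a + b) / e) + b * (b / e) = 0 := by
    field_simp
    linear_combination (a * b + b ^ 2) * h2F
  rw [c1S, c2S, map_one, map_zero, zero_mul, add_zero] at prodS
  rw [c1T, c2T, map_one, map_zero, zero_mul, add_zero] at prodT
  -- images of the multipliers under the maps
  have hΨM : Ψ ((algebraMap F _ a + algebraMap F _ b *
      (QuatSymbol.X F α β ⊗ₜ 1 + 1 ⊗ₜ QuatSymbol.X F γ δ))) =
      algebraMap F _ a + algebraMap F _ b *
        (QuatSymbol.X F α (e * β) ⊗ₜ 1 + 1 ⊗ₜ QuatSymbol.X F γ (e * δ)) := by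
    rw [map_add, map_mul, map_add, AlgHom.commutes, AlgHom.commutes, hΨ1, hΨ3]
  have hΦM : Φ ((algebraMap F _ ((a + b) / e) + algebraMap F _ (b / e) *
      (QuatSymbol.X F α (e * β) ⊗ₜ 1 + 1 ⊗ₜ QuatSymbol.X F γ (e * δ)))) =
      algebraMap F _ ((a + b) / e) + algebraMap F _ (b / e) *
        (QuatSymbol.X F α β ⊗ₜ 1 + 1 ⊗ₜ QuatSymbol.X F γ δ) := by
    rw [map_add, map_mul, map_add, AlgHom.commutes, AlgHom.commutes, hΦ1, hΦ3]
  refine ⟨AlgEquiv.ofAlgHom Ψ Φ ?_ ?_⟩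
  · refine Algebra.TensorProduct.ext (QuatSymbol.hom_ext ?_ ?_) (QuatSymbol.hom_ext ?_ ?_) <;>
      simp only [AlgHom.coe_comp, Function.comp_apply, Algebra.TensorProduct.includeLeft_apply,
        Algebra.TensorProduct.includeRight_apply, AlgHom.coe_id, id_eq,
        AlgHom.coe_restrictScalars', AlgHom.restrictScalars_apply]
    · rw [hΦ1, hΨ1]
    · rw [hΦ2, map_mul, hΨM, hΨ2, ← mul_assoc, prodT, one_mul]
    · rw [hΦ3, hΨ3]
    · rw [hΦ4, map_mul, hΨM, hΨ4, ← mul_assoc, prodT, one_mul]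
  · refine Algebra.TensorProduct.ext (QuatSymbol.hom_ext ?_ ?_) (QuatSymbol.hom_ext ?_ ?_) <;>
      simp only [AlgHom.coe_comp, Function.comp_apply, Algebra.TensorProduct.includeLeft_apply,
        Algebra.TensorProduct.includeRight_apply, AlgHom.coe_id, id_eq,
        AlgHom.coe_restrictScalars', AlgHom.restrictScalars_apply]
    · rw [hΨ1, hΦ1]
    · rw [hΨ2, map_mul, hΦM, hΦ2, ← mul_assoc, prodS, one_mul]
    · rw [hΨ3, hΦ3]
    · rw [hΨ4, map_mul, hΦM, hΦ4, ← mul_assoc, prodS, one_mul]
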